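/- Let B be positive semidefinite in A₁ and Φ : A₁ → A₂ positive with Φ*(Φ(B)⁰) ≤ I. If Tr Φ(B) = Tr B, then for every function f on the spectrum of B with f(0) = 0 one has f(B)·Φ*(Φ(B)⁰) = Φ*(Φ(B)⁰)·f(B) = f(B). -/

import Mathlib

open Matrix ComplexOrder

/-- `P` is the support projection of the matrix `M`: the orthogonal projection onto the
range of `M`. -/
def IsSupportProjection {k : ℕ} (M P : Matrix (Fin k) (Fin k) ℂ) : Prop :=
  P.IsHermitian ∧ P * P = P ∧ LinearMap.range P.mulVecLin = LinearMap.range M.mulVecLin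

lemma aux_eq_zero_of_trace_conjTranspose_mul_self {n p : ℕ}
    (Z : Matrix (Fin n) (Fin p) ℂ) (h : (Zᴴ * Z).trace = 0) : Z = 0 := by
  have h' : (∑ j, ∑ i, (Complex.normSq (Z i j) : ℂ)) = 0 := by
    rw [← h]
    simp only [Matrix.trace, Matrix.diag, Matrix.mul_apply, Matrix.conjTranspose_apply]
    refine (Finset.sum_congr rfl fun j _ => Finset.sum_congr rfl fun i _ => ?_).symm
    rw [Complex.normSq_eq_conj_mul_self]; rfl
  have h'' : (∑ j, ∑ i, Complex.normSq (Z i j)) = 0 := by exact_mod_cast h'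
  ext i j
  have hj := (Finset.sum_eq_zero_iff_of_nonneg (fun j' _ =>
    Finset.sum_nonneg fun i' _ => Complex.normSq_nonneg _)).mp h'' j (Finset.mem_univ _)
  have hij := (Finset.sum_eq_zero_iff_of_nonneg (fun i' _ =>
    Complex.normSq_nonneg _)).mp hj i (Finset.mem_univ _)
  simpa using Complex.normSq_eq_zero.mp hij

open scoped MatrixOrder in
noncomputable def Matrix.PosSemidef.sqrt {n : ℕ} {X : Matrix (Fin n) (Fin n) ℂ}
    (_hX : X.PosSemidef) : Matrix (Fin n) (Fin n) ℂ := CFC.sqrt X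

open scoped MatrixOrder in
lemma Matrix.PosSemidef.posSemidef_sqrt {n : ℕ} {X : Matrix (Fin n) (Fin n) ℂ}
    (hX : X.PosSemidef) : hX.sqrt.PosSemidef :=
  Matrix.nonneg_iff_posSemidef.mp (CFC.sqrt_nonneg X)

open scoped MatrixOrder in
lemma Matrix.PosSemidef.sqrt_mul_self {n : ℕ} {X : Matrix (Fin n) (Fin n) ℂ}
    (hX : X.PosSemidef) : hX.sqrt * hX.sqrt = X :=
  CFC.sqrt_mul_sqrt_self X (Matrix.nonneg_iff_posSemidef.mpr hX)

lemma aux_mul_eq_zero_of_trace_eq_zero {n : ℕ} {X Y : Matrix (Fin n) (Fin n) ℂ}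
    (hX : X.PosSemidef) (hY : Y.PosSemidef) (h : (X * Y).trace = 0) : X * Y = 0 := by
  have hX2h : hX.sqrtᴴ = hX.sqrt := hX.posSemidef_sqrt.1
  have hY2h : hY.sqrtᴴ = hY.sqrt := hY.posSemidef_sqrt.1
  have hZ : hY.sqrt * hX.sqrt = 0 := by
    apply aux_eq_zero_of_trace_conjTranspose_mul_self
    have heq : (hY.sqrt * hX.sqrt)ᴴ * (hY.sqrt * hX.sqrt) = hX.sqrt * (Y * hX.sqrt) := by
      rw [conjTranspose_mul, hX2h, hY2h, Matrix.mul_assoc, ← Matrix.mul_assoc hY.sqrt hY.sqrt,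
        hY.sqrt_mul_self]
    rw [heq, trace_mul_comm, Matrix.mul_assoc, hX.sqrt_mul_self, trace_mul_comm, h]
  calc X * Y = hX.sqrt * (hY.sqrt * hX.sqrt)ᴴ * hY.sqrt := by
        rw [conjTranspose_mul, hX2h, hY2h, ← Matrix.mul_assoc, hX.sqrt_mul_self,
          Matrix.mul_assoc, hY.sqrt_mul_self]
    _ = 0 := by rw [hZ]; simp

/-- If `B ≥ 0`, `Φ` is a positive linear map with Hilbert–Schmidt adjoint `Ψ = Φ*`
satisfying `Φ*(Φ(B)⁰) ≤ I`, and `Tr Φ(B) = Tr B`, then for every function `f` (on the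
spectrum of `B`) with `f 0 = 0` one has
`f(B) · Φ*(Φ(B)⁰) = Φ*(Φ(B)⁰) · f(B) = f(B)`, with `f(B)` given by functional calculus. -/
theorem cfc_mul_adjoint_support_of_trace_eq {m k : ℕ}
    (Φ : Matrix (Fin m) (Fin m) ℂ →ₗ[ℂ] Matrix (Fin k) (Fin k) ℂ)
    (Ψ : Matrix (Fin k) (Fin k) ℂ →ₗ[ℂ] Matrix (Fin m) (Fin m) ℂ)
    (hΦ : ∀ X : Matrix (Fin m) (Fin m) ℂ, X.PosSemidef → (Φ X).PosSemidef)
    (hadj : ∀ (X : Matrix (Fin m) (Fin m) ℂ) (Y : Matrix (Fin k) (Fin k) ℂ),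
      ((Φ X)ᴴ * Y).trace = (Xᴴ * Ψ Y).trace)
    (B : Matrix (Fin m) (Fin m) ℂ) (hB : B.PosSemidef)
    (P : Matrix (Fin k) (Fin k) ℂ) (hP : IsSupportProjection (Φ B) P)
    (hle : (1 - Ψ P).PosSemidef)
    (htr : (Φ B).trace = B.trace) :
    ∀ f : ℝ → ℝ, f 0 = 0 →
      cfc f B * Ψ P = cfc f B ∧ Ψ P * cfc f B = cfc f B := by
  obtain ⟨hPh, hPP, hrange⟩ := hP
  have hΦB := hΦ B hB
  -- P * Φ B = Φ B
  have hPΦB : P * Φ B = Φ B := by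
    have : ∀ x, (P * Φ B) *ᵥ x = (Φ B) *ᵥ x := by
      intro x
      have hx : (Φ B) *ᵥ x ∈ LinearMap.range P.mulVecLin := by
        rw [hrange]; exact ⟨x, rfl⟩
      obtain ⟨y, hy⟩ := hx
      simp only [mulVecLin_apply] at hy
      rw [← Matrix.mulVec_mulVec, ← hy, Matrix.mulVec_mulVec, hPP]
    ext i j
    have := congrFun (this (Pi.single j 1)) i
    simpa [Matrix.mulVec_single] using this
  -- trace of B * Ψ P
  have htrBP : (B * Ψ P).trace = B.trace := by
    have h1 := hadj B P
    rw [hB.1] at h1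
    rw [← h1, hΦB.1, trace_mul_comm, hPΦB, htr]
  -- B * (1 - Ψ P) = 0
  have hzero : B * (1 - Ψ P) = 0 := by
    apply aux_mul_eq_zero_of_trace_eq_zero hB hle
    rw [Matrix.mul_sub, Matrix.mul_one, trace_sub, htrBP, sub_self]
  have hBΨ : B * Ψ P = B := by
    have := hzero
    rw [Matrix.mul_sub, Matrix.mul_one, sub_eq_zero] at this
    exact this.symm
  have hΨh : (Ψ P)ᴴ = Ψ P := by
    have h1 : (1 - Ψ P)ᴴ = 1 - Ψ P := hle.1
    rw [conjTranspose_sub, conjTranspose_one] at h1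
    have := congrArg (fun X => (1 : Matrix (Fin m) (Fin m) ℂ) - X) h1
    simpa using this
  have hΨB : Ψ P * B = B := by
    have := congrArg conjTranspose hBΨ
    rwa [conjTranspose_mul, hΨh, hB.1] at this
  intro f hf0
  have hsa : IsSelfAdjoint B := hB.1
  -- f x = x * (f x * x⁻¹)
  set g : ℝ → ℝ := fun x => f x * x⁻¹ with hg
  have hfg : ∀ x, f x = x * g x := by
    intro x
    rcases eq_or_ne x 0 with rfl | hx
    · simp [hg, hf0]
    · simp only [hg]; field_simp
  have hcont : ∀ h : ℝ → ℝ, ContinuousOn h (spectrum ℝ B) :=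
    fun h => (Matrix.finite_real_spectrum (A := B)).continuousOn h
  have h1 : cfc f B = B * cfc g B := by
    conv_lhs => rw [funext hfg]
    rw [cfc_mul _ _ B (hcont _) (hcont _), cfc_id' ℝ B]
  have h2 : cfc f B = cfc g B * B := by
    have : (fun x => x * g x) = fun x => g x * x := by ext x; ring
    conv_lhs => rw [funext hfg, this]
    rw [cfc_mul _ _ B (hcont _) (hcont _), cfc_id' ℝ B]
  constructor
  · rw [h2, Matrix.mul_assoc, hBΨ, ← h2]
  · rw [h1, ← Matrix.mul_assoc, hΨB, ← h1]
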